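/- Let Γ be a finite simplicial graph with right-angled Artin group A_Γ, and define for vertices v, w the relation v ≤ w if lk(v) ⊆ st(w). Then the relation ≤ is transitive on vertices of Γ. -/

import Mathlib

/-- In a finite simplicial graph, with `lk(v)` the link (neighbor set) of a vertex `v` and
`st(v) = {v} ∪ lk(v)` its star, the relation `v ≤ w` defined by `lk(v) ⊆ st(w)` is
transitive (Charney–Vogtmann). -/
theorem link_star_relation_transitive {V : Type*} [Fintype V] (Γ : SimpleGraph V)
    (u v w : V)
    (huv : Γ.neighborSet u ⊆ insert v (Γ.neighborSet v))
    (hvw : Γ.neighborSet v ⊆ insert w (Γ.neighborSet w)) :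
    Γ.neighborSet u ⊆ insert w (Γ.neighborSet w) := by
  intro x hx
  rcases huv hx with rfl | hxv
  · -- x = v; show v ∈ insert w N(w)
    have hu : u ∈ Γ.neighborSet x := Γ.adj_symm hx
    rcases hvw hu with rfl | huw
    · exact Or.inr hx
    · have hw : w ∈ Γ.neighborSet u := Γ.adj_symm huw
      rcases huv hw with rfl | hwv
      · exact Or.inl rfl
      · exact Or.inr (Γ.adj_symm hwv)
  · exact hvw hxv
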